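/- For every n ≥ 2 and every symmetric polynomial f in n−1 variables over ℂ (i.e. f is invariant under every permutation of its variables), the evaluation f(m(2), …, m(n)) — which is well defined since the Jucys–Murphy elements commute pairwise — lies in the center of the group algebra ℂ[Sₙ]. -/

import Mathlib

/-- The Jucys–Murphy element `m(j) = ∑_{i=1}^{j-1} (i j)` in the group algebra
`ℂ[Sₙ]`, where positions are numbered `1, …, n` (position `p` corresponds to
`p - 1 : Fin n`).  For `j` out of the range `1 ≤ j ≤ n` we set it to `0`. -/
noncomputable def jucysMurphy (n j : ℕ) : MonoidAlgebra ℂ (Equiv.Perm (Fin n)) :=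
  if h : 1 ≤ j ∧ j ≤ n then
    ∑ i ∈ Finset.univ.filter (fun i : Fin n => (i : ℕ) + 1 < j),
      MonoidAlgebra.of ℂ (Equiv.Perm (Fin n)) (Equiv.swap i ⟨j - 1, by omega⟩)
  else 0

/-- Evaluation of a multivariate polynomial `f` in `n - 1` variables at the
(pairwise commuting) Jucys–Murphy elements `m(2), …, m(n)`: the variable
indexed by `i : Fin (n-1)` is sent to `m(i+2)`.  Since the elements commute,
taking the products of the powers in the fixed order of `Fin (n-1)` gives the
usual evaluation. -/
noncomputable def evalJucysMurphy (n : ℕ) (f : MvPolynomial (Fin (n - 1)) ℂ) :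
    MonoidAlgebra ℂ (Equiv.Perm (Fin n)) :=
  ∑ d ∈ f.support, f.coeff d •
    ((List.finRange (n - 1)).map (fun (i : Fin (n - 1)) => jucysMurphy n (i.val + 2) ^ d i)).prod

namespace JMaux

open Finset Equiv

noncomputable abbrev og (n : ℕ) : Equiv.Perm (Fin n) →* MonoidAlgebra ℂ (Equiv.Perm (Fin n)) :=
  MonoidAlgebra.of ℂ (Equiv.Perm (Fin n))

lemma comm_core {n : ℕ} (σ : Equiv.Perm (Fin n)) (j : ℕ)
    (hfix : ∀ h : j - 1 < n, σ ⟨j - 1, h⟩ = ⟨j - 1, h⟩)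
    (hlow : ∀ i : Fin n, (i : ℕ) + 1 < j → ((σ i : ℕ) + 1 < j)) :
    Commute (og n σ) (jucysMurphy n j) := by
  unfold jucysMurphy
  split_ifs with hj
  · obtain ⟨hj1, hj2⟩ := hj
    set p : Fin n := ⟨j - 1, by omega⟩ with hp
    set S := Finset.univ.filter (fun i : Fin n => (i : ℕ) + 1 < j) with hS
    have hmem : ∀ i : Fin n, i ∈ S ↔ (i : ℕ) + 1 < j := by simp [hS]
    have hmapsto : ∀ i ∈ S, σ i ∈ S := fun i hi => (hmem _).2 (hlow i ((hmem i).1 hi))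
    have hiff : ∀ i : Fin n, i ∈ S ↔ σ i ∈ S := by
      have himg : S.image σ = S := Finset.eq_of_subset_of_card_le
        (fun x hx => by obtain ⟨i, hi, rfl⟩ := Finset.mem_image.1 hx; exact hmapsto i hi)
        (le_of_eq (Finset.card_image_of_injective _ σ.injective).symm)
      intro i
      constructor
      · exact hmapsto i
      · intro h
        rw [← himg, Finset.mem_image] at h
        obtain ⟨w, hw, hww⟩ := h
        rwa [σ.injective hww] at hw
    show _ * _ = _ * _
    rw [Finset.mul_sum, Finset.sum_mul]
    have step : ∀ i : Fin n, og n σ * og n (Equiv.swap i p) = og n (Equiv.swap (σ i) p) * og n σ := by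
      intro i
      rw [← map_mul, ← map_mul, Equiv.mul_swap_eq_swap_mul, hfix _]
    simp_rw [step]
    exact Finset.sum_equiv σ (fun i => hiff i) (fun i _ => rfl)
  · exact Commute.zero_right _

lemma comm_swap {n : ℕ} (a b : Fin n) (k : ℕ) (ha : (a : ℕ) + 1 < k) (hb : (b : ℕ) + 1 < k) :
    Commute (og n (Equiv.swap a b)) (jucysMurphy n k) := by
  apply comm_core
  · intro h
    apply Equiv.swap_apply_of_ne_of_ne
    · exact fun hc => by simp [Fin.ext_iff] at hc; omega
    · exact fun hc => by simp [Fin.ext_iff] at hc; omega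
  · intro i hi
    rcases eq_or_ne i a with rfl | hia
    · rwa [Equiv.swap_apply_left]
    rcases eq_or_ne i b with rfl | hib
    · rwa [Equiv.swap_apply_right]
    · rwa [Equiv.swap_apply_of_ne_of_ne hia hib]

lemma comm_swap_high {n : ℕ} (a b : Fin n) (k : ℕ) (hk : 1 ≤ k) (ha : k ≤ (a : ℕ))
    (hb : k ≤ (b : ℕ)) :
    Commute (og n (Equiv.swap a b)) (jucysMurphy n k) := by
  apply comm_core
  · intro h
    apply Equiv.swap_apply_of_ne_of_ne
    · exact fun hc => by simp [Fin.ext_iff] at hc; omega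
    · exact fun hc => by simp [Fin.ext_iff] at hc; omega
  · intro i hi
    rw [Equiv.swap_apply_of_ne_of_ne]
    · exact hi
    · exact fun hc => by subst hc; omega
    · exact fun hc => by subst hc; omega

lemma jm_commute {n : ℕ} (j k : ℕ) :
    Commute (jucysMurphy n j) (jucysMurphy n k) := by
  have key : ∀ j k : ℕ, j < k → Commute (jucysMurphy n j) (jucysMurphy n k) := by
    intro j k hjk
    rw [jucysMurphy]
    split_ifs with hj
    · apply Commute.sum_left
      intro i hi
      simp only [Finset.mem_filter] at hi
      exact comm_swap _ _ _ (by omega) (by show j - 1 + 1 < k; omega)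
    · exact Commute.zero_left _
  rcases lt_trichotomy j k with h | rfl | h
  · exact key j k h
  · rfl
  · exact (key k j h).symm

lemma ssone {n : ℕ} (a b : Fin n) : og n (Equiv.swap a b) * og n (Equiv.swap a b) = 1 := by
  rw [← map_mul, Equiv.swap_mul_self, map_one]

lemma rel_low {n k : ℕ} (hk1 : 2 ≤ k) (hk2 : k + 1 ≤ n) :
    og n (Equiv.swap ⟨k - 1, by omega⟩ ⟨k, by omega⟩) * jucysMurphy n k
      = jucysMurphy n (k + 1) * og n (Equiv.swap ⟨k - 1, by omega⟩ ⟨k, by omega⟩) - 1 := by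
  set q : Fin n := ⟨k - 1, by omega⟩ with hq
  set r : Fin n := ⟨k, by omega⟩ with hr
  set τ := Equiv.swap q r with hτ
  rw [jucysMurphy, jucysMurphy, dif_pos (by omega : 1 ≤ k ∧ k ≤ n),
    dif_pos (by omega : 1 ≤ k + 1 ∧ k + 1 ≤ n)]
  have hp1 : (⟨k - 1, by omega⟩ : Fin n) = q := rfl
  have hp2 : (⟨k + 1 - 1, by omega⟩ : Fin n) = r := by simp [hr, Fin.ext_iff]
  rw [hp1, hp2]
  have hSins : Finset.univ.filter (fun i : Fin n => (i : ℕ) + 1 < k + 1)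
      = insert q (Finset.univ.filter (fun i : Fin n => (i : ℕ) + 1 < k)) := by
    ext w
    simp only [Finset.mem_filter, Finset.mem_univ, true_and, Finset.mem_insert, hq, Fin.ext_iff]
    omega
  have hqnot : q ∉ Finset.univ.filter (fun i : Fin n => (i : ℕ) + 1 < k) := by
    simp only [Finset.mem_filter, Finset.mem_univ, true_and, hq]
    omega
  rw [hSins, Finset.sum_insert hqnot, add_mul, Finset.mul_sum, Finset.sum_mul]
  have hterm : ∀ i ∈ Finset.univ.filter (fun i : Fin n => (i : ℕ) + 1 < k),
      og n τ * og n (Equiv.swap i q) = og n (Equiv.swap i r) * og n τ := by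
    intro i hi
    simp only [Finset.mem_filter] at hi
    rw [← map_mul, ← map_mul, Equiv.mul_swap_eq_swap_mul]
    have e1 : τ i = i := by
      apply Equiv.swap_apply_of_ne_of_ne
      · intro hc; rw [hc] at hi; have h6 : k - 1 + 1 < k := hi.2; omega
      · intro hc; rw [hc] at hi; have h6 : k + 1 < k := hi.2; omega
    have e2 : τ q = r := Equiv.swap_apply_left q r
    rw [e1, e2]
  rw [Finset.sum_congr rfl hterm]
  have : og n (Equiv.swap q r) * og n τ = 1 := ssone q r
  rw [this]
  abel

lemma rel_high {n k : ℕ} (hk1 : 2 ≤ k) (hk2 : k + 1 ≤ n) :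
    og n (Equiv.swap ⟨k - 1, by omega⟩ ⟨k, by omega⟩) * jucysMurphy n (k + 1)
      = jucysMurphy n k * og n (Equiv.swap ⟨k - 1, by omega⟩ ⟨k, by omega⟩) + 1 := by
  set s := og n (Equiv.swap (⟨k - 1, by omega⟩ : Fin n) ⟨k, by omega⟩) with hs
  have h2 : s * s = 1 := ssone _ _
  have h1 := rel_low (n := n) hk1 hk2
  rw [← hs] at h1
  have h3 : jucysMurphy n (k + 1) = s * jucysMurphy n k * s + s := by
    have h4 := congrArg (fun z => z * s) h1
    simp only [sub_mul, one_mul, mul_assoc, h2, mul_one] at h4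
    rw [← mul_assoc] at h4
    rw [h4]
    abel
  have h5 : s * (s * jucysMurphy n k * s) = jucysMurphy n k * s := by
    rw [← mul_assoc, ← mul_assoc, h2, one_mul]
  rw [h3, mul_add, h5, h2]

lemma jm_two {n : ℕ} (hn : 2 ≤ n) :
    jucysMurphy n 2 = og n (Equiv.swap ⟨0, by omega⟩ ⟨1, by omega⟩) := by
  rw [jucysMurphy, dif_pos (by omega : 1 ≤ 2 ∧ 2 ≤ n)]
  have h : Finset.univ.filter (fun i : Fin n => (i : ℕ) + 1 < 2) = {⟨0, by omega⟩} := by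
    ext w
    simp only [Finset.mem_filter, Finset.mem_univ, true_and, Finset.mem_singleton, Fin.ext_iff]
    omega
  rw [h, Finset.sum_singleton]

section Key
variable {R : Type*} [Ring R]

lemma key0 (s x y : R) (hy : s * y = x * s + 1) (b : ℕ) :
    s * y ^ b = x ^ b * s + ∑ i ∈ Finset.range b, x ^ i * y ^ (b - 1 - i) := by
  induction b with
  | zero => simp
  | succ b ih =>
    rw [pow_succ', ← mul_assoc, hy, add_mul, one_mul, mul_assoc, ih, mul_add,
      Finset.sum_range_succ']
    have h1 : ∀ i ∈ Finset.range b, x * (x ^ i * y ^ (b - 1 - i))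
        = x ^ (i + 1) * y ^ (b + 1 - 1 - (i + 1)) := by
      intro i hi
      rw [Finset.mem_range] at hi
      rw [← mul_assoc, ← pow_succ']
      congr 2
      omega
    rw [Finset.mul_sum, Finset.sum_congr rfl h1, ← mul_assoc, ← pow_succ']
    simp only [pow_zero, one_mul, Nat.add_sub_cancel, Nat.sub_zero]
    abel

lemma key (s x y : R) (hx : s * x = y * s - 1) (hy : s * y = x * s + 1)
    (hxy : Commute x y) (a b : ℕ) :
    s * (x ^ a * y ^ b) = x ^ b * y ^ a * s +
      ((∑ i ∈ Finset.range b, x ^ i * y ^ (a + b - 1 - i)) -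
       (∑ i ∈ Finset.range a, x ^ i * y ^ (a + b - 1 - i))) := by
  induction a generalizing b with
  | zero => simpa using key0 s x y hy b
  | succ a ih =>
    rw [pow_succ', mul_assoc, ← mul_assoc s x, hx, sub_mul, one_mul, mul_assoc, ih b,
      mul_add, mul_sub]
    have hyx : ∀ c : ℕ, y * x ^ c = x ^ c * y := fun c => ((hxy.symm).pow_right c).eq
    have hterm : ∀ i : ℕ, i < a + b → y * (x ^ i * y ^ (a + b - 1 - i))
        = x ^ i * y ^ (a + 1 + b - 1 - i) := by
      intro i hi
      have e1 : a + b - 1 - i + 1 = a + 1 + b - 1 - i := by omega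
      rw [← mul_assoc, hyx, mul_assoc, ← pow_succ', e1]
    have hb : y * ∑ i ∈ Finset.range b, x ^ i * y ^ (a + b - 1 - i)
        = ∑ i ∈ Finset.range b, x ^ i * y ^ (a + 1 + b - 1 - i) := by
      rw [Finset.mul_sum]
      exact Finset.sum_congr rfl fun i hi => hterm i (by
        rw [Finset.mem_range] at hi; omega)
    have ha : y * ∑ i ∈ Finset.range a, x ^ i * y ^ (a + b - 1 - i)
        = (∑ i ∈ Finset.range (a + 1), x ^ i * y ^ (a + 1 + b - 1 - i)) - x ^ a * y ^ b := by
      rw [Finset.mul_sum, Finset.sum_range_succ]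
      have e2 : a + 1 + b - 1 - a = b := by omega
      rw [e2, Finset.sum_congr rfl fun i hi => hterm i (by
        rw [Finset.mem_range] at hi; omega)]
      abel
    have hfront : y * (x ^ b * y ^ a * s) = x ^ b * y ^ (a + 1) * s := by
      rw [← mul_assoc, ← mul_assoc, hyx, mul_assoc (x ^ b), ← pow_succ']
    rw [hb, ha, hfront]
    abel

lemma assoc5 (p s r : R) (hsr : s * r = r * s) : (p * s) * r = (p * r) * s := by
  rw [mul_assoc, hsr, ← mul_assoc]

lemma key' (s x y r : R) (hx : s * x = y * s - 1) (hy : s * y = x * s + 1)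
    (hxy : Commute x y) (hsr : s * r = r * s) (a b : ℕ) :
    s * (x ^ a * (y ^ b * r)) = x ^ b * (y ^ a * r) * s +
      ((∑ i ∈ Finset.range b, x ^ i * y ^ (a + b - 1 - i)) -
       (∑ i ∈ Finset.range a, x ^ i * y ^ (a + b - 1 - i))) * r := by
  rw [show x ^ a * (y ^ b * r) = (x ^ a * y ^ b) * r by rw [mul_assoc], ← mul_assoc,
    key s x y hx hy hxy a b, add_mul]
  congr 1
  rw [assoc5 _ s r hsr, mul_assoc (x ^ b) (y ^ a) r]

end Key

section NC
variable {M : Type*} [Monoid M]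

lemma listprod_eq_ncp {m : ℕ} (F : Fin m → M) (comm : ∀ a b : Fin m, Commute (F a) (F b)) :
    ((List.finRange m).map F).prod
      = Finset.univ.noncommProd F (fun a _ b _ _ => comm a b) := by
  unfold Finset.noncommProd
  rw [Fin.univ_def]
  exact (Multiset.noncommProd_coe _ _).symm

lemma ncp_split {α : Type*} [DecidableEq α] [Fintype α] (F : α → M)
    (comm : ∀ a b : α, Commute (F a) (F b)) (u v : α) (huv : u ≠ v) :
    Finset.univ.noncommProd F (fun a _ b _ _ => comm a b) =
      F u * (F v * ((Finset.univ \ {u, v}).noncommProd F (fun a _ b _ _ => comm a b))) := by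
  have hsplit : (Finset.univ : Finset α)
      = insert u (insert v (Finset.univ \ {u, v})) := by
    ext w
    simp only [Finset.mem_univ, Finset.mem_insert, Finset.mem_sdiff, true_iff, true_and,
      Finset.mem_singleton]
    by_cases h1 : w = u
    · tauto
    by_cases h2 : w = v
    · tauto
    · tauto
  rw [Finset.noncommProd_congr hsplit (fun x _ => rfl) (Set.pairwise_of_forall _ _ fun a b => comm a b)]
  exact (Finset.noncommProd_insert_of_notMem _ _ _ _ (by simp [huv])).trans
    (congrArg _ (Finset.noncommProd_insert_of_notMem _ _ _ _ (by simp)))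

end NC

end JMaux

open JMaux Finset Equiv in
/-- For every `n ≥ 2` and every symmetric polynomial `f` in `n - 1` variables
over `ℂ`, the evaluation `f(m(2), …, m(n))` at the Jucys–Murphy elements lies
in the center of the group algebra `ℂ[Sₙ]`. -/
theorem evalJucysMurphy_mem_center (n : ℕ) (hn : 2 ≤ n)
    (f : MvPolynomial (Fin (n - 1)) ℂ) (hf : f.IsSymmetric) :
    evalJucysMurphy n f ∈
      Subalgebra.center ℂ (MonoidAlgebra ℂ (Equiv.Perm (Fin n))) := by
  obtain ⟨m, rfl⟩ : ∃ m, n = m + 2 := ⟨n - 2, by omega⟩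
  -- notation
  set A := MonoidAlgebra ℂ (Equiv.Perm (Fin (m + 2))) with hA
  let Φ : (Fin (m + 1) →₀ ℕ) → Fin (m + 1) → A :=
    fun d w => jucysMurphy (m + 2) ((w : ℕ) + 2) ^ d w
  have hΦcomm : ∀ d, ∀ a b : Fin (m + 1), Commute (Φ d a) (Φ d b) :=
    fun d a b => (jm_commute _ _).pow_pow _ _
  have hF : evalJucysMurphy (m + 2) f
      = ∑ d ∈ f.support, f.coeff d • ((List.finRange (m + 1)).map (Φ d)).prod := rfl
  -- the main step: commuting with adjacent transpositions
  have main : ∀ i : Fin (m + 1),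
      og (m + 2) (Equiv.swap i.castSucc i.succ) * evalJucysMurphy (m + 2) f
        = evalJucysMurphy (m + 2) f * og (m + 2) (Equiv.swap i.castSucc i.succ) := by
    intro i
    by_cases hi0 : (i : ℕ) = 0
    · -- the swap (1 2) commutes with every Jucys–Murphy element
      have hcomm : ∀ w : Fin (m + 1),
          Commute (og (m + 2) (Equiv.swap i.castSucc i.succ))
            (jucysMurphy (m + 2) ((w : ℕ) + 2)) := by
        intro w
        by_cases hw0 : (w : ℕ) = 0
        · have h1 : ((w : ℕ) + 2) = 2 := by omega
          rw [h1, jm_two (by omega)]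
          have h2 : Equiv.swap i.castSucc i.succ
              = Equiv.swap (⟨0, by omega⟩ : Fin (m + 2)) ⟨1, by omega⟩ := by
            congr 1
            · apply Fin.ext; show (i : ℕ) = 0; omega
            · apply Fin.ext; show (i : ℕ) + 1 = 1; omega
          rw [h2]
        · apply comm_swap
          · simp only [Fin.coe_castSucc]; omega
          · simp only [Fin.val_succ]; omega
      have : Commute (og (m + 2) (Equiv.swap i.castSucc i.succ)) (evalJucysMurphy (m + 2) f) := by
        rw [hF]
        apply Commute.sum_right
        intro d _
        apply Commute.smul_right
        apply Commute.list_prod_right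
        intro z hz
        rw [List.mem_map] at hz
        obtain ⟨w, _, rfl⟩ := hz
        exact (hcomm w).pow_right _
      exact this
    · -- the interesting case
      have hi1 : 1 ≤ (i : ℕ) := by omega
      have hf' : ∀ e : Equiv.Perm (Fin (m + 1)), MvPolynomial.rename (⇑e) f = f :=
        fun e => hf e
      set v : Fin (m + 1) := i with hv
      set k : ℕ := (v : ℕ) + 1 with hk
      have hk1 : 2 ≤ k := by omega
      have hk2 : k + 1 ≤ m + 2 := by have := v.isLt; omega
      set τ : Equiv.Perm (Fin (m + 2)) := Equiv.swap ⟨k - 1, by omega⟩ ⟨k, by omega⟩ with hτdef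
      have hτ : Equiv.swap v.castSucc v.succ = τ := by
        have e1 : v.castSucc = (⟨k - 1, by omega⟩ : Fin (m + 2)) := by
          apply Fin.ext; show (v : ℕ) = k - 1; omega
        have e2 : v.succ = (⟨k, by omega⟩ : Fin (m + 2)) := by
          apply Fin.ext; show (v : ℕ) + 1 = k; omega
        rw [hτdef, e1, e2]
      set s : A := og (m + 2) τ with hs
      set u : Fin (m + 1) := ⟨(v : ℕ) - 1, by omega⟩ with hu
      have huv : u ≠ v := by
        intro hc
        have : (v : ℕ) - 1 = (v : ℕ) := congrArg Fin.val hc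
        omega
      set x : A := jucysMurphy (m + 2) ((u : ℕ) + 2) with hxdef
      set y : A := jucysMurphy (m + 2) ((v : ℕ) + 2) with hydef
      have hux : (u : ℕ) + 2 = k := by show (v : ℕ) - 1 + 2 = k; omega
      have hvy : (v : ℕ) + 2 = k + 1 := by omega
      have hx : s * x = y * s - 1 := by
        rw [hxdef, hydef, hux, hvy, hs, hτdef]
        exact rel_low hk1 hk2
      have hy : s * y = x * s + 1 := by
        rw [hxdef, hydef, hux, hvy, hs, hτdef]
        exact rel_high hk1 hk2
      have hxy : Commute x y := jm_commute _ _
      -- the variable renaming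
      set E : (Fin (m + 1) →₀ ℕ) → (Fin (m + 1) →₀ ℕ) :=
        fun d => Finsupp.equivMapDomain (Equiv.swap u v) d with hE
      have hEapp : ∀ d w, E d w = d (Equiv.swap u v w) := by
        intro d w
        simp [hE, Finsupp.equivMapDomain_apply, Equiv.symm_swap]
      have hEu : ∀ d, E d u = d v := fun d => by rw [hEapp, Equiv.swap_apply_left]
      have hEv : ∀ d, E d v = d u := fun d => by rw [hEapp, Equiv.swap_apply_right]
      have hEw : ∀ d w, w ≠ u → w ≠ v → E d w = d w := fun d w h1 h2 => by
        rw [hEapp, Equiv.swap_apply_of_ne_of_ne h1 h2]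
      have hEE : ∀ d, E (E d) = d := by
        intro d
        ext w
        rw [hEapp, hEapp, Equiv.swap_apply_self]
      have hcoeff : ∀ d, f.coeff (E d) = f.coeff d := by
        intro d
        have h1 := MvPolynomial.coeff_rename_mapDomain (⇑(Equiv.swap u v))
          (Equiv.injective _) f d
        rw [hf' (Equiv.swap u v)] at h1
        rw [show E d = Finsupp.mapDomain (⇑(Equiv.swap u v)) d from
          Finsupp.equivMapDomain_eq_mapDomain _ _]
        exact h1
      have hsupp : ∀ d ∈ f.support, E d ∈ f.support := by
        intro d hd
        rw [MvPolynomial.mem_support_iff] at hd ⊢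
        rwa [hcoeff]
      -- product decomposition
      set T : Finset (Fin (m + 1)) := Finset.univ \ {u, v} with hT
      set R : (Fin (m + 1) →₀ ℕ) → A :=
        fun d => T.noncommProd (Φ d) (fun a _ b _ _ => hΦcomm d a b) with hR
      have hM : ∀ d, ((List.finRange (m + 1)).map (Φ d)).prod
          = x ^ d u * (y ^ d v * R d) := by
        intro d
        rw [listprod_eq_ncp (Φ d) (hΦcomm d), ncp_split (Φ d) (hΦcomm d) u v huv]
      have hRE : ∀ d, R (E d) = R d := by
        intro d
        apply Finset.noncommProd_congr rfl
        intro w hw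
        rw [hT, Finset.mem_sdiff, Finset.mem_insert, Finset.mem_singleton] at hw
        push_neg at hw
        show jucysMurphy (m + 2) ((w : ℕ) + 2) ^ (E d) w
          = jucysMurphy (m + 2) ((w : ℕ) + 2) ^ d w
        rw [hEw d w hw.2.1 hw.2.2]
      have hcommsR : ∀ d, Commute s (R d) := by
        intro d
        apply Finset.noncommProd_commute
        intro w hw
        rw [hT, Finset.mem_sdiff, Finset.mem_insert, Finset.mem_singleton] at hw
        push_neg at hw
        have hwu : (w : ℕ) ≠ (v : ℕ) - 1 := fun hc => hw.2.1 (Fin.ext hc)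
        have hwv : (w : ℕ) ≠ (v : ℕ) := fun hc => hw.2.2 (Fin.ext hc)
        rw [hs, hτdef]
        show Commute _ (Φ d w)
        apply Commute.pow_right
        by_cases hlow : (w : ℕ) + 2 ≤ k - 1
        · have ha' : (w : ℕ) + 2 ≤ (((⟨k - 1, by omega⟩ : Fin (m + 2))) : ℕ) := hlow
          have hb' : (w : ℕ) + 2 ≤ (((⟨k, by omega⟩ : Fin (m + 2))) : ℕ) := by
            show (w : ℕ) + 2 ≤ k; omega
          exact comm_swap_high _ _ _ (by omega) ha' hb'
        · have h1 : (((⟨k - 1, by omega⟩ : Fin (m + 2))) : ℕ) + 1 < (w : ℕ) + 2 := by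
            show k - 1 + 1 < (w : ℕ) + 2; omega
          have h2 : (((⟨k, by omega⟩ : Fin (m + 2))) : ℕ) + 1 < (w : ℕ) + 2 := by
            show k + 1 < (w : ℕ) + 2; omega
          exact comm_swap _ _ _ h1 h2
      -- the divided-difference correction term
      set Dt : (Fin (m + 1) →₀ ℕ) → A := fun d =>
        (∑ j ∈ Finset.range (d v), x ^ j * y ^ (d u + d v - 1 - j)) -
        (∑ j ∈ Finset.range (d u), x ^ j * y ^ (d u + d v - 1 - j)) with hDt
      have hDanti : ∀ d, Dt (E d) = - Dt d := by
        intro d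
        simp only [hDt, hEu, hEv]
        have hcc : d v + d u = d u + d v := Nat.add_comm _ _
        rw [hcc, neg_sub]
      have hstep : ∀ d, s * (x ^ d u * (y ^ d v * R d))
          = x ^ d v * (y ^ d u * R d) * s + Dt d * R d := by
        intro d
        simp only [hDt]
        exact key' s x y (R d) hx hy hxy (hcommsR d).eq (d u) (d v)
      have hterm : ∀ d ∈ f.support,
          s * (f.coeff d • ((List.finRange (m + 1)).map (Φ d)).prod)
            = f.coeff d • (((List.finRange (m + 1)).map (Φ (E d))).prod * s)
              + f.coeff d • (Dt d * R d) := by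
        intro d _
        rw [mul_smul_comm, hM d, hstep d, hM (E d), hEu, hEv, hRE, smul_add]
      rw [hτ, ← hs, hF, Finset.mul_sum, Finset.sum_mul]
      rw [Finset.sum_congr rfl hterm, Finset.sum_add_distrib]
      have hsum1 : ∑ d ∈ f.support,
            f.coeff d • (((List.finRange (m + 1)).map (Φ (E d))).prod * s)
          = ∑ d ∈ f.support, f.coeff d • (((List.finRange (m + 1)).map (Φ d)).prod * s) := by
        refine Finset.sum_nbij' E E hsupp hsupp (fun d _ => hEE d) (fun d _ => hEE d) ?_
        intro d hd
        rw [hcoeff]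
      have hsum2 : ∑ d ∈ f.support, f.coeff d • (Dt d * R d) = 0 := by
        set Z := ∑ d ∈ f.support, f.coeff d • (Dt d * R d) with hZ
        have hre1 : Z = ∑ d ∈ f.support, f.coeff d • (Dt (E d) * R (E d)) := by
          rw [hZ]
          refine Finset.sum_nbij' E E hsupp hsupp (fun d _ => hEE d) (fun d _ => hEE d) ?_
          intro d hd
          rw [hcoeff, hEE]
        have hre : Z = - Z := by
          nth_rewrite 1 [hre1]
          simp only [hDanti, hRE, neg_mul, smul_neg]
          rw [hZ, ← Finset.sum_neg_distrib]
          exact Finset.sum_congr rfl fun d _ => by rw [← smul_neg]; exact congrArg _ (neg_mul (Dt d) (R d))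
        have h2Z : (2 : ℂ) • Z = 0 := by
          rw [two_smul]
          nth_rewrite 2 [hre]
          exact add_neg_cancel _
        rcases smul_eq_zero.mp h2Z with h | h
        · exact absurd h two_ne_zero
        · exact h
      rw [hsum1, hsum2, add_zero]
      simp only [smul_mul_assoc]
  -- from generators to the whole group algebra
  have hcen : ∀ σ : Equiv.Perm (Fin (m + 2)),
      og (m + 2) σ * evalJucysMurphy (m + 2) f = evalJucysMurphy (m + 2) f * og (m + 2) σ := by
    intro σ
    have hσ : σ ∈ Submonoid.closure (Set.range fun i : Fin (m + 1) =>
        Equiv.swap i.castSucc i.succ) := by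
      rw [Equiv.Perm.mclosure_swap_castSucc_succ]
      trivial
    induction hσ using Submonoid.closure_induction with
    | mem x hx => obtain ⟨i, rfl⟩ := hx; exact main i
    | one =>
        show MonoidAlgebra.single 1 1 * _ = _ * MonoidAlgebra.single 1 1
        rw [← MonoidAlgebra.one_def, one_mul, mul_one]
    | mul a b ha hb iha ihb => rw [map_mul, mul_assoc, ihb, ← mul_assoc, iha, mul_assoc]
  rw [Subalgebra.mem_center_iff]
  intro z
  induction z using MonoidAlgebra.induction_on with
  | of σ => exact hcen σ
  | add a b ha hb => rw [add_mul, mul_add, ha, hb]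
  | smul r a ha => rw [smul_mul_assoc, mul_smul_comm, ha]
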